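/- For each α ∈ ℝ₊ \ ℕ, the minimal polynomial approximation error satisfies E_{m,0}(|x|^α, [-1,1]) = O(m^{-α}) as m → ∞. -/

import Mathlib

open Real Filter Polynomial

noncomputable def ratErr (f : ℝ → ℝ) (a b : ℝ) (m n : ℕ) : ℝ :=
  sInf {e : ℝ | ∃ p q : Polynomial ℝ, p.degree ≤ m ∧ q.degree ≤ n ∧
    (∀ x ∈ Set.Icc a b, q.eval x ≠ 0) ∧
    e = ⨆ x : Set.Icc a b, |f ↑x - p.eval ↑x / q.eval ↑x|}

open MeasureTheory intervalIntegral Set Topology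

noncomputable def cosP (n : ℕ) (u : ℝ) : ℝ :=
  ∑ j ∈ Finset.range n, (-1 : ℝ)^j * u^(2*j) / (2*j).factorial

noncomputable def sinP (n : ℕ) (u : ℝ) : ℝ :=
  ∑ j ∈ Finset.range n, (-1 : ℝ)^j * u^(2*j+1) / (2*j+1).factorial

noncomputable def gg (n : ℕ) (u : ℝ) : ℝ := Real.cos u - cosP n u
noncomputable def ss (n : ℕ) (u : ℝ) : ℝ := Real.sin u - sinP n u

lemma cosP_zero_eval (n : ℕ) : cosP (n+1) 0 = 1 := by
  unfold cosP
  rw [Finset.sum_range_succ']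
  simp

lemma sinP_zero_eval (n : ℕ) : sinP n 0 = 0 := by
  unfold sinP
  apply Finset.sum_eq_zero
  intro j _
  simp [pow_succ]

lemma gg_zero_eval (n : ℕ) : gg (n+1) 0 = 0 := by
  simp [gg, cosP_zero_eval]

lemma ss_zero_eval (n : ℕ) : ss n 0 = 0 := by
  simp [ss, sinP_zero_eval]

lemma fact_cast_succ (k : ℕ) : ((k+1).factorial : ℝ) = (k+1) * k.factorial := by
  push_cast [Nat.factorial_succ]; ring

lemma hasDerivAt_sinP (n : ℕ) (u : ℝ) : HasDerivAt (sinP n) (cosP n u) u := by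
  unfold sinP cosP
  apply HasDerivAt.fun_sum
  intro j _
  have h := ((hasDerivAt_pow (2*j+1) u).const_mul ((-1:ℝ)^j)).div_const ((2*j+1).factorial : ℝ)
  convert h using 1
  · rfl
  rw [fact_cast_succ (2*j)]
  have : ((2*j).factorial : ℝ) ≠ 0 := by positivity
  field_simp
  push_cast [Nat.add_sub_cancel]
  ring

lemma hasDerivAt_cosP (n : ℕ) (u : ℝ) : HasDerivAt (cosP (n+1)) (-sinP n u) u := by
  have hre : ∀ v : ℝ, cosP (n+1) v = (∑ j ∈ Finset.range n, (-1:ℝ)^(j+1) * v^(2*(j+1)) / (2*(j+1)).factorial) + 1 := by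
    intro v
    unfold cosP
    rw [Finset.sum_range_succ']
    simp
  have heq : cosP (n+1) = fun v => (∑ j ∈ Finset.range n, (-1:ℝ)^(j+1) * v^(2*(j+1)) / (2*(j+1)).factorial) + 1 := funext hre
  rw [heq]
  have hsum : HasDerivAt (fun v : ℝ => ∑ j ∈ Finset.range n, (-1:ℝ)^(j+1) * v^(2*(j+1)) / (2*(j+1)).factorial)
      (-sinP n u) u := by
    have : -sinP n u = ∑ j ∈ Finset.range n, (-1:ℝ)^(j+1) * (((2*(j+1):ℕ):ℝ) * u^(2*(j+1)-1)) / (2*(j+1)).factorial := by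
      unfold sinP
      rw [← Finset.sum_neg_distrib]
      apply Finset.sum_congr rfl
      intro j _
      have h1 : 2*(j+1)-1 = 2*j+1 := by omega
      have h2 : ((2*(j+1)).factorial : ℝ) = (2*j+2) * (2*j+1).factorial := by
        have : 2*(j+1) = (2*j+1)+1 := by omega
        rw [this, fact_cast_succ]; push_cast; ring
      rw [h1, h2]
      have : ((2*j+1).factorial : ℝ) ≠ 0 := by positivity
      field_simp
      push_cast
      ring
    rw [this]
    apply HasDerivAt.fun_sum
    intro j _
    exact ((hasDerivAt_pow (2*(j+1)) u).const_mul ((-1:ℝ)^(j+1))).div_const _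
  simpa using hsum.add_const 1

lemma bound_test : True := trivial

lemma hasDerivAt_ss (n : ℕ) (u : ℝ) : HasDerivAt (ss n) (gg n u) u :=
  (Real.hasDerivAt_sin u).sub (hasDerivAt_sinP n u)

lemma hasDerivAt_gg (n : ℕ) (u : ℝ) : HasDerivAt (gg (n+1)) (-(ss n u)) u := by
  have h := (Real.hasDerivAt_cos u).sub (hasDerivAt_cosP n u)
  have e : -Real.sin u - -sinP n u = -(ss n u) := by unfold ss; ring
  rw [e] at h
  exact h

lemma continuous_gg (n : ℕ) : Continuous (gg n) := by
  unfold gg cosP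
  continuity

lemma continuous_ss (n : ℕ) : Continuous (ss n) := by
  unfold ss sinP
  continuity

lemma ss_integral_rep (n : ℕ) (u : ℝ) : ss n u = ∫ t in (0:ℝ)..u, gg n t := by
  rw [intervalIntegral.integral_eq_sub_of_hasDerivAt (fun t _ => hasDerivAt_ss n t)
    ((continuous_gg n).intervalIntegrable 0 u), ss_zero_eval, sub_zero]

lemma gg_integral_rep (n : ℕ) (u : ℝ) : gg (n+1) u = -∫ t in (0:ℝ)..u, ss n t := by
  have := intervalIntegral.integral_eq_sub_of_hasDerivAt (fun t (_ : t ∈ uIcc 0 u) => hasDerivAt_gg n t)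
    (((continuous_ss n).neg).intervalIntegrable 0 u)
  rw [intervalIntegral.integral_neg] at this
  rw [gg_zero_eval, sub_zero] at this
  linarith [this]

/-- helper: if `|h t| ≤ t^k/k!` on `[0,u]` then `|∫_0^u h| ≤ u^(k+1)/(k+1)!` -/
lemma abs_integral_bound {h : ℝ → ℝ} (hc : Continuous h) (k : ℕ) {u : ℝ} (hu : 0 ≤ u)
    (hb : ∀ t, 0 ≤ t → |h t| ≤ t^k / k.factorial) :
    |∫ t in (0:ℝ)..u, h t| ≤ u^(k+1) / (k+1).factorial := by
  have h1 : |∫ t in (0:ℝ)..u, h t| ≤ ∫ t in (0:ℝ)..u, |h t| :=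
    intervalIntegral.abs_integral_le_integral_abs hu
  have h2 : (∫ t in (0:ℝ)..u, |h t|) ≤ ∫ t in (0:ℝ)..u, t^k / k.factorial := by
    apply intervalIntegral.integral_mono_on hu
    · exact (hc.abs).intervalIntegrable 0 u
    · exact ((continuous_pow k).div_const _).intervalIntegrable 0 u
    · intro t ht; exact hb t ht.1
  have h3 : (∫ t in (0:ℝ)..u, t^k / k.factorial) = u^(k+1) / (k+1).factorial := by
    rw [intervalIntegral.integral_div, integral_pow]
    rw [zero_pow (by omega : k+1 ≠ 0), sub_zero, div_div, fact_cast_succ]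
  rw [← h3]
  exact h1.trans h2

lemma taylor_bounds (n : ℕ) : (∀ u : ℝ, 0 ≤ u → |gg n u| ≤ u^(2*n) / (2*n).factorial) ∧
    (∀ u : ℝ, 0 ≤ u → |ss n u| ≤ u^(2*n+1) / (2*n+1).factorial) := by
  induction n with
  | zero =>
    constructor
    · intro u _; simpa [gg, cosP] using Real.abs_cos_le_one u
    · intro u hu
      rw [ss_integral_rep]
      have := abs_integral_bound (continuous_gg 0) 0 hu (fun t ht => by
        simpa [gg, cosP] using Real.abs_cos_le_one t)
      simpa using this
  | succ n ih =>
    have hg : ∀ u : ℝ, 0 ≤ u → |gg (n+1) u| ≤ u^(2*(n+1)) / (2*(n+1)).factorial := by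
      intro u hu
      rw [gg_integral_rep, abs_neg]
      have := abs_integral_bound (continuous_ss n) (2*n+1) hu ih.2
      have he : 2*n+1+1 = 2*(n+1) := by omega
      rwa [he] at this
    refine ⟨hg, ?_⟩
    intro u hu
    rw [ss_integral_rep]
    have := abs_integral_bound (continuous_gg (n+1)) (2*(n+1)) hu hg
    exact this

lemma bound_gg (n : ℕ) (u : ℝ) (hu : 0 ≤ u) : |gg n u| ≤ u^(2*n) / (2*n).factorial :=
  (taylor_bounds n).1 u hu

lemma bound_ss (n : ℕ) (u : ℝ) (hu : 0 ≤ u) : |ss n u| ≤ u^(2*n+1) / (2*n+1).factorial :=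
  (taylor_bounds n).2 u hu

lemma bound_gg_crude (n : ℕ) (u : ℝ) (hu : 1 ≤ u) : |gg (n+1) u| ≤ (n+2) * u^(2*n) := by
  have hu0 : (0:ℝ) ≤ u := by linarith
  have h1 : |gg (n+1) u| ≤ 1 + ∑ j ∈ Finset.range (n+1), u^(2*j) / (2*j).factorial := by
    unfold gg cosP
    refine (abs_sub _ _).trans ?_
    gcongr
    · exact Real.abs_cos_le_one u
    · refine (Finset.abs_sum_le_sum_abs _ _).trans ?_
      apply Finset.sum_le_sum
      intro j _
      rw [abs_div, abs_mul, abs_pow, abs_neg, abs_one, one_pow, one_mul, abs_pow,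
        abs_of_nonneg hu0, Nat.abs_cast]
  have h2 : ∀ j ∈ Finset.range (n+1), u^(2*j) / (2*j).factorial ≤ u^(2*n) := by
    intro j hj
    have hj' : j ≤ n := Nat.lt_succ_iff.mp (Finset.mem_range.mp hj)
    have hfac : (1:ℝ) ≤ (2*j).factorial := by
      exact_mod_cast Nat.one_le_iff_ne_zero.mpr (Nat.factorial_ne_zero _)
    calc u^(2*j) / (2*j).factorial ≤ u^(2*j) := div_le_self (by positivity) hfac
      _ ≤ u^(2*n) := pow_le_pow_right₀ hu (by omega)
  have h3 : (∑ j ∈ Finset.range (n+1), u^(2*j) / (2*j).factorial) ≤ (n+1) * u^(2*n) := by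
    calc (∑ j ∈ Finset.range (n+1), u^(2*j) / (2*j).factorial)
        ≤ ∑ _j ∈ Finset.range (n+1), u^(2*n) := Finset.sum_le_sum h2
      _ = (n+1) * u^(2*n) := by rw [Finset.sum_const, Finset.card_range]; push_cast; ring
  have h4 : (1:ℝ) ≤ u^(2*n) := one_le_pow₀ hu
  calc |gg (n+1) u| ≤ 1 + ∑ j ∈ Finset.range (n+1), u^(2*j) / (2*j).factorial := h1
    _ ≤ u^(2*n) + (n+1) * u^(2*n) := by linarith
    _ = (n+2) * u^(2*n) := by ring

lemma bound_ss_crude (n : ℕ) (u : ℝ) (hu : 1 ≤ u) : |ss (n+1) u| ≤ (n+2) * u^(2*n+1) := by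
  have hu0 : (0:ℝ) ≤ u := by linarith
  have h1 : |ss (n+1) u| ≤ 1 + ∑ j ∈ Finset.range (n+1), u^(2*j+1) / (2*j+1).factorial := by
    unfold ss sinP
    refine (abs_sub _ _).trans ?_
    gcongr
    · exact Real.abs_sin_le_one u
    · refine (Finset.abs_sum_le_sum_abs _ _).trans ?_
      apply Finset.sum_le_sum
      intro j _
      rw [abs_div, abs_mul, abs_pow, abs_neg, abs_one, one_pow, one_mul, abs_pow,
        abs_of_nonneg hu0, Nat.abs_cast]
  have h2 : ∀ j ∈ Finset.range (n+1), u^(2*j+1) / (2*j+1).factorial ≤ u^(2*n+1) := by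
    intro j hj
    have hj' : j ≤ n := Nat.lt_succ_iff.mp (Finset.mem_range.mp hj)
    have hfac : (1:ℝ) ≤ (2*j+1).factorial := by
      exact_mod_cast Nat.one_le_iff_ne_zero.mpr (Nat.factorial_ne_zero _)
    calc u^(2*j+1) / (2*j+1).factorial ≤ u^(2*j+1) := div_le_self (by positivity) hfac
      _ ≤ u^(2*n+1) := pow_le_pow_right₀ hu (by omega)
  have h3 : (∑ j ∈ Finset.range (n+1), u^(2*j+1) / (2*j+1).factorial) ≤ (n+1) * u^(2*n+1) := by
    calc (∑ j ∈ Finset.range (n+1), u^(2*j+1) / (2*j+1).factorial)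
        ≤ ∑ _j ∈ Finset.range (n+1), u^(2*n+1) := Finset.sum_le_sum h2
      _ = (n+1) * u^(2*n+1) := by rw [Finset.sum_const, Finset.card_range]; push_cast; ring
  have h4 : (1:ℝ) ≤ u^(2*n+1) := one_le_pow₀ hu
  calc |ss (n+1) u| ≤ 1 + ∑ j ∈ Finset.range (n+1), u^(2*j+1) / (2*j+1).factorial := h1
    _ ≤ u^(2*n+1) + (n+1) * u^(2*n+1) := by linarith
    _ = (n+2) * u^(2*n+1) := by ring

lemma contOn_rpow (p : ℝ) : ContinuousOn (fun u : ℝ => u ^ p) (Ioi 0) := fun x hx =>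
  (Real.continuousAt_rpow_const x p (Or.inl (ne_of_gt hx))).continuousWithinAt

lemma pow_mul_rpow {u : ℝ} (hu : 0 < u) (k : ℕ) (p : ℝ) : u^k * u^p = u^((k:ℝ) + p) := by
  rw [← Real.rpow_natCast u k, ← Real.rpow_add hu]

lemma integrableOn_Ioc_aux {h : ℝ → ℝ} {T C s : ℝ} (hc : ContinuousOn h (Ioi 0))
    (hs : -1 < s) (hb : ∀ u : ℝ, 0 < u → u ≤ T → |h u| ≤ C * u ^ s) :
    IntegrableOn h (Ioc 0 T) := by
  rcases le_or_gt T 0 with hT | hT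
  · rw [Ioc_eq_empty (by exact fun hlt => absurd (hlt.trans_le hT) (lt_irrefl 0))]
    exact integrableOn_empty
  have maj : IntegrableOn (fun u : ℝ => C * u ^ s) (Ioc 0 T) := by
    have := (intervalIntegral.intervalIntegrable_rpow' (a := 0) (b := T) hs).const_mul C
    rwa [intervalIntegrable_iff_integrableOn_Ioc_of_le hT.le] at this
  apply Integrable.mono' maj
  · exact ((hc.mono Ioc_subset_Ioi_self).aestronglyMeasurable measurableSet_Ioc)
  · refine (ae_restrict_iff' measurableSet_Ioc).2 (Filter.Eventually.of_forall ?_)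
    intro u hu
    exact hb u hu.1 hu.2

lemma integrableOn_Ioi_aux {h : ℝ → ℝ} {C s t : ℝ} (hc : ContinuousOn h (Ioi 0))
    (hs : -1 < s) (ht : t < -1)
    (hb1 : ∀ u : ℝ, 0 < u → u ≤ 1 → |h u| ≤ C * u ^ s)
    (hb2 : ∀ u : ℝ, 1 ≤ u → |h u| ≤ C * u ^ t) :
    IntegrableOn h (Ioi 0) := by
  have m1 : IntegrableOn h (Ioc 0 1) := integrableOn_Ioc_aux hc hs hb1
  have m2 : IntegrableOn h (Ioi 1) := by
    have maj : IntegrableOn (fun u : ℝ => C * u ^ t) (Ioi 1) :=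
      (integrableOn_Ioi_rpow_of_lt ht one_pos).const_mul C
    apply Integrable.mono' maj
    · exact ((hc.mono (Ioi_subset_Ioi zero_le_one)).aestronglyMeasurable measurableSet_Ioi)
    · refine (ae_restrict_iff' measurableSet_Ioi).2 (Filter.Eventually.of_forall ?_)
      intro u hu
      exact hb2 u (le_of_lt hu)
  have hun : Ioc (0:ℝ) 1 ∪ Ioi 1 = Ioi 0 := Ioc_union_Ioi_eq_Ioi zero_le_one
  rw [← hun]
  exact m1.union m2

noncomputable def KK (r : ℕ) (α : ℝ) : ℝ := ∫ u in Ioi (0:ℝ), gg r u * u ^ (-1-α)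

lemma integrable_gg_scaled (n : ℕ) {α x : ℝ} (hlo : 2*(n:ℝ) < α) (hhi : α < 2*(n:ℝ)+2)
    (hx0 : 0 ≤ x) (hx1 : x ≤ 1) :
    IntegrableOn (fun t : ℝ => gg (n+1) (x*t) * t ^ (-1-α)) (Ioi 0) := by
  have hcont : ContinuousOn (fun t : ℝ => gg (n+1) (x*t) * t ^ (-1-α)) (Ioi 0) :=
    (((continuous_gg (n+1)).comp (continuous_const.mul continuous_id)).continuousOn).mul
      (contOn_rpow _)
  apply integrableOn_Ioi_aux (C := n+2) (s := 2*n+1-α) (t := 2*n-1-α) hcont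
    (by linarith) (by linarith)
  · intro u hu hu1
    have hxu0 : 0 ≤ x*u := mul_nonneg hx0 hu.le
    have hb : |gg (n+1) (x*u)| ≤ u^(2*(n+1)) := by
      refine (bound_gg (n+1) _ hxu0).trans ?_
      have h1 : (x*u)^(2*(n+1)) ≤ u^(2*(n+1)) := by
        apply pow_le_pow_left₀ hxu0
        nlinarith
      have h2 : (1:ℝ) ≤ (2*(n+1)).factorial := by
        exact_mod_cast Nat.one_le_iff_ne_zero.mpr (Nat.factorial_ne_zero _)
      calc (x*u)^(2*(n+1)) / (2*(n+1)).factorial ≤ (x*u)^(2*(n+1)) :=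
            div_le_self (by positivity) h2
        _ ≤ u^(2*(n+1)) := h1
    have hrp : |(u:ℝ) ^ (-1-α)| = u ^ (-1-α) := abs_of_pos (Real.rpow_pos_of_pos hu _)
    rw [abs_mul, hrp]
    calc |gg (n+1) (x*u)| * u ^ (-1-α) ≤ u^(2*(n+1)) * u ^ (-1-α) := by
          apply mul_le_mul_of_nonneg_right hb (Real.rpow_pos_of_pos hu _).le
      _ = u ^ ((2*(n+1) : ℕ) + (-1-α)) := pow_mul_rpow hu _ _
      _ ≤ (n+2) * u ^ (2*(n:ℝ)+1-α) := by
          have : ((2*(n+1):ℕ):ℝ) + (-1-α) = 2*(n:ℝ)+1-α := by push_cast; ring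
          rw [this]
          nlinarith [Real.rpow_pos_of_pos hu (2*(n:ℝ)+1-α), Nat.cast_nonneg (α := ℝ) n]
  · intro u hu
    have hu0 : (0:ℝ) < u := lt_of_lt_of_le one_pos hu
    have hb : |gg (n+1) (x*u)| ≤ (n+2) * u^(2*n) := by
      rcases le_or_gt (x*u) 1 with hcase | hcase
      · have hxu0 : 0 ≤ x*u := mul_nonneg hx0 hu0.le
        refine (bound_gg (n+1) _ hxu0).trans ?_
        have h2 : (1:ℝ) ≤ (2*(n+1)).factorial := by
          exact_mod_cast Nat.one_le_iff_ne_zero.mpr (Nat.factorial_ne_zero _)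
        have h3 : (x*u)^(2*(n+1)) ≤ 1 := pow_le_one₀ hxu0 hcase
        have h4 : (1:ℝ) ≤ u^(2*n) := one_le_pow₀ hu
        calc (x*u)^(2*(n+1)) / (2*(n+1)).factorial ≤ (x*u)^(2*(n+1)) :=
              div_le_self (by positivity) h2
          _ ≤ 1 := h3
          _ ≤ (n+2) * u^(2*n) := by nlinarith [Nat.cast_nonneg (α := ℝ) n]
      · refine (bound_gg_crude n _ hcase.le).trans ?_
        have : (x*u)^(2*n) ≤ u^(2*n) := by
          apply pow_le_pow_left₀ (mul_nonneg hx0 hu0.le)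
          nlinarith
        nlinarith [Nat.cast_nonneg (α := ℝ) n]
    have hrp : |(u:ℝ) ^ (-1-α)| = u ^ (-1-α) := abs_of_pos (Real.rpow_pos_of_pos hu0 _)
    rw [abs_mul, hrp]
    calc |gg (n+1) (x*u)| * u ^ (-1-α) ≤ ((n+2) * u^(2*n)) * u ^ (-1-α) := by
          apply mul_le_mul_of_nonneg_right hb (Real.rpow_pos_of_pos hu0 _).le
      _ = (n+2) * (u^(2*n) * u ^ (-1-α)) := by ring
      _ = (n+2) * u ^ (((2*n : ℕ):ℝ) + (-1-α)) := by rw [pow_mul_rpow hu0]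
      _ = (n+2) * u ^ (2*(n:ℝ)-1-α) := by
          have : ((2*n:ℕ):ℝ) + (-1-α) = 2*(n:ℝ)-1-α := by push_cast; ring
          rw [this]

lemma integrable_gg_K (n : ℕ) {α : ℝ} (hlo : 2*(n:ℝ) < α) (hhi : α < 2*(n:ℝ)+2) :
    IntegrableOn (fun u : ℝ => gg (n+1) u * u ^ (-1-α)) (Ioi 0) := by
  have h := integrable_gg_scaled n hlo hhi zero_le_one le_rfl
  simpa using h

lemma squeeze_bound {f g : ℝ → ℝ} {l : Filter ℝ} (hb : ∀ᶠ u in l, |f u| ≤ g u)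
    (hg : Tendsto g l (𝓝 0)) : Tendsto f l (𝓝 0) :=
  squeeze_zero_norm' (by simpa using hb) hg

lemma tendsto_rpow_zero_Ici {c : ℝ} (hc : 0 < c) :
    Tendsto (fun u : ℝ => u ^ c) (nhdsWithin 0 (Ici 0)) (𝓝 0) := by
  have h := (Real.continuousAt_rpow_const 0 c (Or.inr hc.le)).tendsto
  rw [Real.zero_rpow hc.ne'] at h
  exact h.mono_left nhdsWithin_le_nhds

lemma tendsto_zero_Ici {f : ℝ → ℝ} {c : ℝ} (hc : 0 < c) (hf0 : f 0 = 0)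
    (hb : ∀ u : ℝ, 0 < u → u ≤ 1 → |f u| ≤ u ^ c) :
    ContinuousWithinAt f (Ici 0) 0 := by
  unfold ContinuousWithinAt
  rw [hf0]
  apply squeeze_bound (g := fun u : ℝ => u ^ c) _ (tendsto_rpow_zero_Ici hc)
  have hmem : Icc (0:ℝ) 1 ∈ nhdsWithin 0 (Ici 0) := by
    apply Icc_mem_nhdsGE_of_mem
    exact ⟨le_rfl, zero_lt_one⟩
  filter_upwards [hmem] with u hu
  rcases eq_or_lt_of_le hu.1 with h0 | h0
  · rw [← h0, hf0, abs_zero, Real.zero_rpow hc.ne']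
  · exact hb u h0 hu.2

lemma tendsto_zero_atTop {f : ℝ → ℝ} {C c : ℝ} (hc : c < 0)
    (hb : ∀ u : ℝ, 1 ≤ u → |f u| ≤ C * u ^ c) : Tendsto f atTop (𝓝 0) := by
  apply squeeze_bound (g := fun u : ℝ => C * u ^ c)
  · filter_upwards [eventually_ge_atTop (1:ℝ)] with u hu using hb u hu
  · have := (tendsto_rpow_neg_atTop (neg_pos.mpr hc)).const_mul C
    simp only [neg_neg, mul_zero] at this
    simpa using this

lemma scaling (r : ℕ) {α x : ℝ} (hα : 0 < α) (hx : 0 < x) (hx1 : x ≤ 1)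
    (hint : IntegrableOn (fun u : ℝ => gg r u * u ^ (-1-α)) (Ioi 0)) :
    ∫ t in Ioi (0:ℝ), gg r (x*t) * t ^ (-1-α) = x ^ α * KK r α := by
  have hcomp := MeasureTheory.integral_comp_mul_left_Ioi
    (fun u : ℝ => gg r u * u ^ (-1-α)) 0 hx
  rw [mul_zero] at hcomp
  have key : ∀ t ∈ Ioi (0:ℝ), gg r (x*t) * t ^ (-1-α)
      = x ^ (1+α) * (gg r (x*t) * (x*t) ^ (-1-α)) := by
    intro t ht
    have ht0 : (0:ℝ) < t := ht
    rw [Real.mul_rpow hx.le ht0.le]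
    rw [show x ^ (1+α) * (gg r (x*t) * (x ^ (-1-α) * t ^ (-1-α)))
      = (x ^ (1+α) * x ^ (-1-α)) * (gg r (x*t) * t ^ (-1-α)) from by ring]
    rw [← Real.rpow_add hx]
    norm_num
  rw [MeasureTheory.setIntegral_congr_fun measurableSet_Ioi key]
  rw [MeasureTheory.integral_const_mul]
  rw [hcomp]
  rw [smul_eq_mul, show x⁻¹ = x ^ (-1:ℝ) from (Real.rpow_neg_one x).symm,
    ← mul_assoc, ← Real.rpow_add hx]
  rw [show (1:ℝ) + α + -1 = α from by ring]
  rfl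

lemma KK_one_neg {α : ℝ} (h0 : 0 < α) (h2 : α < 2) : KK 1 α < 0 := by
  have hint : IntegrableOn (fun u : ℝ => gg 1 u * u ^ (-1-α)) (Ioi 0) := by
    have := integrable_gg_K 0 (by norm_num; exact h0) (by norm_num; linarith)
    simpa using this
  set f : ℝ → ℝ := fun u => (1 - Real.cos u) * u ^ (-1-α) with hf
  have hneg : ∀ u : ℝ, gg 1 u * u ^ (-1-α) = -(f u) := by
    intro u
    simp only [hf, gg, cosP]
    rw [Finset.sum_range_one]
    norm_num
    ring
  have hfint : Integrable f (volume.restrict (Ioi (0:ℝ))) := by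
    have : Integrable (fun u : ℝ => -(gg 1 u * u ^ (-1-α))) (volume.restrict (Ioi (0:ℝ))) :=
      hint.neg
    apply this.congr
    apply Filter.Eventually.of_forall
    intro u
    show -(gg 1 u * u ^ (-1-α)) = f u
    rw [hneg u, neg_neg]
  have hpos : 0 < ∫ u in Ioi (0:ℝ), f u := by
    rw [integral_pos_iff_support_of_nonneg_ae _ hfint]
    · have hsub : Ioo (0:ℝ) π ⊆ Function.support f ∩ Ioi 0 := by
        intro u hu
        constructor
        · have hcos : Real.cos u < 1 := by
            calc Real.cos u < Real.cos 0 :=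
              Real.cos_lt_cos_of_nonneg_of_le_pi le_rfl hu.2.le hu.1
            _ = 1 := Real.cos_zero
          have h1 : 0 < 1 - Real.cos u := by linarith
          have h2 : 0 < u ^ (-1-α) := Real.rpow_pos_of_pos hu.1 _
          exact ne_of_gt (mul_pos h1 h2)
        · exact hu.1
      calc (0:ENNReal) < volume (Ioo (0:ℝ) π) := by
            rw [Real.volume_Ioo]
            simp [Real.pi_pos]
        _ ≤ volume (Function.support f ∩ Ioi 0) := measure_mono hsub
        _ = (volume.restrict (Ioi (0:ℝ))) (Function.support f) := by
            rw [Measure.restrict_apply (measurableSet_support (by fun_prop))]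
    · rw [EventuallyLE, ae_restrict_iff' measurableSet_Ioi]
      apply Filter.Eventually.of_forall
      intro u hu
      have h1 : 0 ≤ 1 - Real.cos u := by linarith [Real.cos_le_one u]
      have h2 : 0 ≤ u ^ (-1-α) := (Real.rpow_pos_of_pos hu _).le
      exact mul_nonneg h1 h2
  have : KK 1 α = -∫ u in Ioi (0:ℝ), f u := by
    unfold KK
    rw [← MeasureTheory.integral_neg]
    apply MeasureTheory.setIntegral_congr_fun measurableSet_Ioi
    intro u _
    show gg 1 u * u ^ (-1-α) = -(f u)
    exact hneg u
  rw [this]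
  linarith

lemma abs_mul_rpow_le {u b C p : ℝ} (hu : 0 < u) {k : ℕ} (hb : |b| ≤ C * u^k) :
    |b * u ^ p| ≤ C * u ^ ((k:ℝ) + p) := by
  rw [abs_mul, abs_of_pos (Real.rpow_pos_of_pos hu p)]
  calc |b| * u ^ p ≤ (C * u^k) * u ^ p :=
        mul_le_mul_of_nonneg_right hb (Real.rpow_pos_of_pos hu p).le
    _ = C * (u^k * u ^ p) := by ring
    _ = C * u ^ ((k:ℝ) + p) := by rw [pow_mul_rpow hu]

lemma bound_ss_small (n : ℕ) {u : ℝ} (hu0 : 0 ≤ u) (hu1 : u ≤ 1) :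
    |ss (n+1) u| ≤ 1 * u^(2*n+3) := by
  rw [one_mul]
  refine (bound_ss (n+1) u hu0).trans ?_
  have h2 : (1:ℝ) ≤ (2*(n+1)+1).factorial := by
    exact_mod_cast Nat.one_le_iff_ne_zero.mpr (Nat.factorial_ne_zero _)
  have : 2*(n+1)+1 = 2*n+3 := by omega
  rw [this] at h2 ⊢
  exact div_le_self (by positivity) h2

lemma bound_gg_small (n : ℕ) {u : ℝ} (hu0 : 0 ≤ u) :
    |gg (n+1) u| ≤ 1 * u^(2*n+2) := by
  rw [one_mul]
  refine (bound_gg (n+1) u hu0).trans ?_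
  have h2 : (1:ℝ) ≤ (2*(n+1)).factorial := by
    exact_mod_cast Nat.one_le_iff_ne_zero.mpr (Nat.factorial_ne_zero _)
  have : 2*(n+1) = 2*n+2 := by omega
  rw [this] at h2 ⊢
  exact div_le_self (by positivity) h2

lemma parts1 (n : ℕ) {α : ℝ} (hlo : 2*(n:ℝ)+2 < α) (hhi : α < 2*(n:ℝ)+4) :
    ∫ u in Ioi (0:ℝ), ss (n+1) u * u ^ (-α) = -α * KK (n+2) α := by
  have hα0 : (0:ℝ) < α := by linarith [Nat.cast_nonneg (α := ℝ) n]
  set F : ℝ → ℝ := fun u => gg (n+2) u * u ^ (-α) with hF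
  set F' : ℝ → ℝ := fun u =>
    -(ss (n+1) u) * u ^ (-α) + gg (n+2) u * (-α * u ^ (-α-1)) with hF'
  have hexp : (-α-1 : ℝ) = -1-α := by ring
  have hderiv : ∀ u ∈ Ioi (0:ℝ), HasDerivAt F (F' u) u := by
    intro u hu
    exact (hasDerivAt_gg (n+1) u).mul
      (Real.hasDerivAt_rpow_const (p := -α) (Or.inl (ne_of_gt hu)))
  have hcont : ContinuousWithinAt F (Ici 0) 0 := by
    apply tendsto_zero_Ici (c := 2*(n:ℝ)+4-α) (by linarith)
    · show gg (n+2) 0 * (0:ℝ) ^ (-α) = 0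
      rw [gg_zero_eval (n+1), zero_mul]
    · intro u hu hu1
      have h := abs_mul_rpow_le (C := 1) (p := -α) hu (bound_gg_small (n+1) hu.le)
      rw [one_mul] at h
      have he : ((2*(n+1)+2 : ℕ):ℝ) + -α = 2*(n:ℝ)+4-α := by push_cast; ring
      rwa [he] at h
  have hint1 : IntegrableOn (fun u : ℝ => -(ss (n+1) u) * u ^ (-α)) (Ioi 0) := by
    have hcontOn : ContinuousOn (fun u : ℝ => -(ss (n+1) u) * u ^ (-α)) (Ioi 0) :=
      ((continuous_ss (n+1)).neg.continuousOn).mul (contOn_rpow _)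
    apply integrableOn_Ioi_aux (C := n+2) (s := 2*(n:ℝ)+3-α) (t := 2*(n:ℝ)+1-α) hcontOn
      (by linarith) (by linarith)
    · intro u hu hu1
      have hb : |(-(ss (n+1) u))| ≤ (n+2) * u^(2*n+3) := by
        rw [abs_neg]
        refine (bound_ss_small n hu.le hu1).trans ?_
        rw [one_mul]
        nlinarith [pow_nonneg hu.le (2*n+3), Nat.cast_nonneg (α := ℝ) n]
      have h := abs_mul_rpow_le (p := -α) hu hb
      have he : ((2*n+3 : ℕ):ℝ) + -α = 2*(n:ℝ)+3-α := by push_cast; ring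
      rwa [he] at h
    · intro u hu
      have hu0 : (0:ℝ) < u := lt_of_lt_of_le one_pos hu
      have hb : |(-(ss (n+1) u))| ≤ (n+2) * u^(2*n+1) := by
        rw [abs_neg]; exact bound_ss_crude n u hu
      have h := abs_mul_rpow_le (p := -α) hu0 hb
      have he : ((2*n+1 : ℕ):ℝ) + -α = 2*(n:ℝ)+1-α := by push_cast; ring
      rwa [he] at h
  have hintK : IntegrableOn (fun u : ℝ => gg (n+2) u * u ^ (-1-α)) (Ioi 0) :=
    integrable_gg_K (n+1) (by push_cast; linarith) (by push_cast; linarith)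
  have hint2 : IntegrableOn (fun u : ℝ => gg (n+2) u * (-α * u ^ (-α-1))) (Ioi 0) := by
    have : (fun u : ℝ => gg (n+2) u * (-α * u ^ (-α-1)))
        = fun u : ℝ => -α * (gg (n+2) u * u ^ (-1-α)) := by
      funext u; rw [hexp]; ring
    rw [this]
    exact hintK.const_mul _
  have hintF' : IntegrableOn F' (Ioi 0) := hint1.add hint2
  have htop : Tendsto F atTop (𝓝 0) := by
    apply tendsto_zero_atTop (C := (n+3:ℝ)) (c := 2*(n:ℝ)+2-α) (by linarith)
    intro u hu
    have hu0 : (0:ℝ) < u := lt_of_lt_of_le one_pos hu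
    have h := abs_mul_rpow_le (p := -α) hu0 (bound_gg_crude (n+1) u hu)
    have he : ((2*(n+1) : ℕ):ℝ) + -α = 2*(n:ℝ)+2-α := by push_cast; ring
    rw [he] at h
    have hc : (((n+1:ℕ)):ℝ) + 2 = (n:ℝ) + 3 := by push_cast; ring
    rwa [hc] at h
  have hFTC := MeasureTheory.integral_Ioi_of_hasDerivAt_of_tendsto hcont hderiv hintF' htop
  have hF0 : F 0 = 0 := by
    show gg (n+2) 0 * (0:ℝ) ^ (-α) = 0
    rw [gg_zero_eval (n+1), zero_mul]
  rw [hF0, sub_zero] at hFTC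
  have hsplit : ∫ u in Ioi (0:ℝ), F' u
      = (∫ u in Ioi (0:ℝ), -(ss (n+1) u) * u ^ (-α))
        + ∫ u in Ioi (0:ℝ), gg (n+2) u * (-α * u ^ (-α-1)) :=
    MeasureTheory.integral_add hint1 hint2
  have e1 : (∫ u in Ioi (0:ℝ), -(ss (n+1) u) * u ^ (-α))
      = -∫ u in Ioi (0:ℝ), ss (n+1) u * u ^ (-α) := by
    rw [← MeasureTheory.integral_neg]
    congr 1; funext u; ring
  have e2 : (∫ u in Ioi (0:ℝ), gg (n+2) u * (-α * u ^ (-α-1)))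
      = -α * KK (n+2) α := by
    have : (fun u : ℝ => gg (n+2) u * (-α * u ^ (-α-1)))
        = fun u : ℝ => -α * (gg (n+2) u * u ^ (-1-α)) := by
      funext u; rw [hexp]; ring
    rw [this, MeasureTheory.integral_const_mul]
    rfl
  rw [hsplit, e1, e2] at hFTC
  linarith [hFTC]

lemma parts2 (n : ℕ) {α : ℝ} (hlo : 2*(n:ℝ)+2 < α) (hhi : α < 2*(n:ℝ)+4) :
    KK (n+1) (α-2) = -(1-α) * ∫ u in Ioi (0:ℝ), ss (n+1) u * u ^ (-α) := by
  set G : ℝ → ℝ := fun u => ss (n+1) u * u ^ (1-α) with hG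
  set G' : ℝ → ℝ := fun u =>
    gg (n+1) u * u ^ (1-α) + ss (n+1) u * ((1-α) * u ^ (1-α-1)) with hG'
  have hexp : (1-α-1 : ℝ) = -α := by ring
  have hderiv : ∀ u ∈ Ioi (0:ℝ), HasDerivAt G (G' u) u := by
    intro u hu
    exact (hasDerivAt_ss (n+1) u).mul
      (Real.hasDerivAt_rpow_const (p := 1-α) (Or.inl (ne_of_gt hu)))
  have hcont : ContinuousWithinAt G (Ici 0) 0 := by
    apply tendsto_zero_Ici (c := 2*(n:ℝ)+4-α) (by linarith)
    · show ss (n+1) 0 * (0:ℝ) ^ (1-α) = 0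
      rw [ss_zero_eval, zero_mul]
    · intro u hu hu1
      have h := abs_mul_rpow_le (C := 1) (p := 1-α) hu (bound_ss_small n hu.le hu1)
      rw [one_mul] at h
      have he : ((2*n+3 : ℕ):ℝ) + (1-α) = 2*(n:ℝ)+4-α := by push_cast; ring
      rwa [he] at h
  have hint1 : IntegrableOn (fun u : ℝ => gg (n+1) u * u ^ (1-α)) (Ioi 0) := by
    have hcontOn : ContinuousOn (fun u : ℝ => gg (n+1) u * u ^ (1-α)) (Ioi 0) :=
      ((continuous_gg (n+1)).continuousOn).mul (contOn_rpow _)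
    apply integrableOn_Ioi_aux (C := n+2) (s := 2*(n:ℝ)+3-α) (t := 2*(n:ℝ)+1-α) hcontOn
      (by linarith) (by linarith)
    · intro u hu hu1
      have hb : |gg (n+1) u| ≤ (n+2) * u^(2*n+2) := by
        refine (bound_gg_small n hu.le).trans ?_
        rw [one_mul]
        nlinarith [pow_nonneg hu.le (2*n+2), Nat.cast_nonneg (α := ℝ) n]
      have h := abs_mul_rpow_le (p := 1-α) hu hb
      have he : ((2*n+2 : ℕ):ℝ) + (1-α) = 2*(n:ℝ)+3-α := by push_cast; ring
      rwa [he] at h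
    · intro u hu
      have hu0 : (0:ℝ) < u := lt_of_lt_of_le one_pos hu
      have h := abs_mul_rpow_le (p := 1-α) hu0 (bound_gg_crude n u hu)
      have he : ((2*n : ℕ):ℝ) + (1-α) = 2*(n:ℝ)+1-α := by push_cast; ring
      rwa [he] at h
  have hint2 : IntegrableOn (fun u : ℝ => ss (n+1) u * ((1-α) * u ^ (1-α-1))) (Ioi 0) := by
    have hbase : IntegrableOn (fun u : ℝ => ss (n+1) u * u ^ (-α)) (Ioi 0) := by
      have hcontOn : ContinuousOn (fun u : ℝ => ss (n+1) u * u ^ (-α)) (Ioi 0) :=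
        ((continuous_ss (n+1)).continuousOn).mul (contOn_rpow _)
      apply integrableOn_Ioi_aux (C := n+2) (s := 2*(n:ℝ)+3-α) (t := 2*(n:ℝ)+1-α) hcontOn
        (by linarith) (by linarith)
      · intro u hu hu1
        have hb : |ss (n+1) u| ≤ (n+2) * u^(2*n+3) := by
          refine (bound_ss_small n hu.le hu1).trans ?_
          rw [one_mul]
          nlinarith [pow_nonneg hu.le (2*n+3), Nat.cast_nonneg (α := ℝ) n]
        have h := abs_mul_rpow_le (p := -α) hu hb
        have he : ((2*n+3 : ℕ):ℝ) + -α = 2*(n:ℝ)+3-α := by push_cast; ring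
        rwa [he] at h
      · intro u hu
        have hu0 : (0:ℝ) < u := lt_of_lt_of_le one_pos hu
        have h := abs_mul_rpow_le (p := -α) hu0 (bound_ss_crude n u hu)
        have he : ((2*n+1 : ℕ):ℝ) + -α = 2*(n:ℝ)+1-α := by push_cast; ring
        rwa [he] at h
    have : (fun u : ℝ => ss (n+1) u * ((1-α) * u ^ (1-α-1)))
        = fun u : ℝ => (1-α) * (ss (n+1) u * u ^ (-α)) := by
      funext u; rw [hexp]; ring
    rw [this]
    exact hbase.const_mul _
  have hintG' : IntegrableOn G' (Ioi 0) := hint1.add hint2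
  have htop : Tendsto G atTop (𝓝 0) := by
    apply tendsto_zero_atTop (C := (n+2:ℝ)) (c := 2*(n:ℝ)+2-α) (by linarith)
    intro u hu
    have hu0 : (0:ℝ) < u := lt_of_lt_of_le one_pos hu
    have h := abs_mul_rpow_le (p := 1-α) hu0 (bound_ss_crude n u hu)
    have he : ((2*n+1 : ℕ):ℝ) + (1-α) = 2*(n:ℝ)+2-α := by push_cast; ring
    rwa [he] at h
  have hFTC := MeasureTheory.integral_Ioi_of_hasDerivAt_of_tendsto hcont hderiv hintG' htop
  have hG0 : G 0 = 0 := by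
    show ss (n+1) 0 * (0:ℝ) ^ (1-α) = 0
    rw [ss_zero_eval, zero_mul]
  rw [hG0, sub_zero] at hFTC
  have hsplit : ∫ u in Ioi (0:ℝ), G' u
      = (∫ u in Ioi (0:ℝ), gg (n+1) u * u ^ (1-α))
        + ∫ u in Ioi (0:ℝ), ss (n+1) u * ((1-α) * u ^ (1-α-1)) :=
    MeasureTheory.integral_add hint1 hint2
  have e1 : (∫ u in Ioi (0:ℝ), gg (n+1) u * u ^ (1-α)) = KK (n+1) (α-2) := by
    unfold KK
    apply MeasureTheory.setIntegral_congr_fun measurableSet_Ioi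
    intro u _
    have : (1-α : ℝ) = -1-(α-2) := by ring
    rw [this]
  have e2 : (∫ u in Ioi (0:ℝ), ss (n+1) u * ((1-α) * u ^ (1-α-1)))
      = (1-α) * ∫ u in Ioi (0:ℝ), ss (n+1) u * u ^ (-α) := by
    have : (fun u : ℝ => ss (n+1) u * ((1-α) * u ^ (1-α-1)))
        = fun u : ℝ => (1-α) * (ss (n+1) u * u ^ (-α)) := by
      funext u; rw [hexp]; ring
    rw [this, MeasureTheory.integral_const_mul]
  rw [hsplit, e1, e2] at hFTC
  linarith [hFTC]

lemma KK_ne (n : ℕ) {α : ℝ} (hlo : 2*(n:ℝ) < α) (hhi : α < 2*(n:ℝ)+2) :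
    KK (n+1) α ≠ 0 := by
  induction n generalizing α with
  | zero =>
    have := KK_one_neg (by simpa using hlo) (by norm_num at hhi; linarith)
    exact ne_of_lt this
  | succ n ih =>
    have hlo' : 2*(n:ℝ)+2 < α := by push_cast at hlo; linarith
    have hhi' : α < 2*(n:ℝ)+4 := by push_cast at hhi; linarith
    have h1 := parts1 n hlo' hhi'
    have h2 := parts2 n hlo' hhi'
    have hprev : KK (n+1) (α-2) ≠ 0 := ih (by linarith) (by linarith)
    intro hzero
    rw [show n+1+1 = n+2 from rfl] at hzero
    rw [h1, hzero, mul_zero, mul_zero] at h2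
    exact hprev h2

lemma rpow_integral_Ioc {T s : ℝ} (hT : 0 < T) (hs : -1 < s) :
    ∫ t in Ioc (0:ℝ) T, t ^ s = T ^ (s+1) / (s+1) := by
  rw [← intervalIntegral.integral_of_le hT.le, integral_rpow (Or.inl hs),
    Real.zero_rpow (by linarith), sub_zero]

lemma pw_eq {x : ℝ} (α : ℝ) (j : ℕ) {t : ℝ} (ht : 0 < t) :
    (-1:ℝ)^j * (x*t)^(2*j) / (2*j).factorial * t^(-1-α)
      = ((-1:ℝ)^j * x^(2*j) / (2*j).factorial) * t^(2*(j:ℝ)-1-α) := by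
  rw [mul_pow]
  rw [show 2*(j:ℝ)-1-α = ((2*j:ℕ):ℝ) + (-1-α) from by push_cast; ring, ← pow_mul_rpow ht]
  ring

lemma gg_split (r R : ℕ) (h : r ≤ R) (v : ℝ) :
    gg r v = gg R v + ∑ j ∈ Finset.Ico r R, (-1:ℝ)^j * v^(2*j)/(2*j).factorial := by
  unfold gg cosP
  rw [Finset.sum_Ico_eq_sub _ h]
  ring

noncomputable def ccoef (α T : ℝ) (j : ℕ) : ℝ :=
  (-1:ℝ)^j * T ^ (2*(j:ℝ)-α) / ((2*j).factorial * (2*(j:ℝ)-α))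

lemma main_est (n J : ℕ) {α T x : ℝ} (hlo : 2*(n:ℝ) < α) (hhi : α < 2*(n:ℝ)+2)
    (hT : 0 < T) (hJn : n ≤ J) (hx0 : 0 ≤ x) (hx1 : x ≤ 1) :
    |KK (n+1) α * x ^ α - ∑ j ∈ Finset.range (J+1), ccoef α T j * x^(2*j)|
      ≤ T ^ (2*(J:ℝ)+2-α) / ((2*(J:ℝ)+2-α) * (2*J+2).factorial) + T ^ (-α) / α := by
  have hα0 : (0:ℝ) < α := lt_of_le_of_lt (by positivity) hlo
  set tj : ℕ → ℝ := fun j =>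
    ((-1:ℝ)^j * x^(2*j) / (2*j).factorial) * (T ^ (2*(j:ℝ)-α) / (2*(j:ℝ)-α)) with htj
  set pw : ℕ → ℝ → ℝ := fun j t =>
    (-1:ℝ)^j * (x*t)^(2*j) / (2*j).factorial * t^(-1-α) with hpw
  set fful : ℝ → ℝ := fun t => gg (n+1) (x*t) * t^(-1-α) with hfful
  set fJ : ℝ → ℝ := fun t => gg (J+1) (x*t) * t^(-1-α) with hfJ
  set cpart : ℝ → ℝ := fun t => Real.cos (x*t) * t^(-1-α) with hcpart
  -- integrability of the full integrand
  have hint_full : IntegrableOn fful (Ioi 0) := integrable_gg_scaled n hlo hhi hx0 hx1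
  -- identity : KK * x^α = ∫ fful
  have hid : KK (n+1) α * x ^ α = ∫ t in Ioi (0:ℝ), fful t := by
    rcases eq_or_lt_of_le hx0 with h0 | h0
    · have hx : x = 0 := h0.symm
      rw [hx, Real.zero_rpow hα0.ne', mul_zero]
      symm
      apply MeasureTheory.integral_eq_zero_of_ae
      apply Filter.Eventually.of_forall
      intro t
      show fful t = (0 : ℝ → ℝ) t
      simp only [hfful, hx, Pi.zero_apply, zero_mul, gg_zero_eval]
    · rw [mul_comm]
      exact (scaling (n+1) hα0 h0 hx1 (integrable_gg_K n hlo hhi)).symm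
  -- split domain
  have hint_Ioc : IntegrableOn fful (Ioc 0 T) :=
    hint_full.mono_set Ioc_subset_Ioi_self
  have hint_IoiT : IntegrableOn fful (Ioi T) :=
    hint_full.mono_set (fun t ht => lt_trans hT ht)
  have hsplit : ∫ t in Ioi (0:ℝ), fful t
      = (∫ t in Ioc (0:ℝ) T, fful t) + ∫ t in Ioi T, fful t := by
    rw [← MeasureTheory.setIntegral_union (Set.Ioc_disjoint_Ioi le_rfl) measurableSet_Ioi
      hint_Ioc hint_IoiT, Ioc_union_Ioi_eq_Ioi hT.le]
  -- Ioc piece : fful = fJ + ∑_{j ∈ Ico (n+1) (J+1)} pw j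
  have hptIoc : ∀ t : ℝ, fful t = fJ t + ∑ j ∈ Finset.Ico (n+1) (J+1), pw j t := by
    intro t
    show gg (n+1) (x*t) * t^(-1-α) = gg (J+1) (x*t) * t^(-1-α) + _
    rw [gg_split (n+1) (J+1) (by omega) (x*t), add_mul, Finset.sum_mul]
  have hint_pw_Ioc : ∀ j ∈ Finset.Ico (n+1) (J+1), IntegrableOn (pw j) (Ioc 0 T) := by
    intro j hj
    have hj' : n+1 ≤ j := (Finset.mem_Ico.mp hj).1
    apply integrableOn_Ioc_aux (C := 1) (s := 2*(j:ℝ)-1-α)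
    · exact ((continuous_const.mul ((continuous_const.mul continuous_id).pow _)).div_const
        _).continuousOn.mul (contOn_rpow _)
    · have : (2*(n:ℝ)+2) ≤ 2*(j:ℝ) := by
        have : ((n:ℝ)+1) ≤ (j:ℝ) := by exact_mod_cast hj'
        linarith
      linarith
    · intro u hu _
      simp only [hpw]
      rw [pw_eq α j hu, abs_mul, one_mul]
      have h1 : |(-1:ℝ)^j * x^(2*j) / (2*j).factorial| ≤ 1 := by
        rw [abs_div, abs_mul, abs_pow, abs_neg, abs_one, one_pow, one_mul, abs_pow,
          abs_of_nonneg hx0, Nat.abs_cast]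
        have hf1 : (1:ℝ) ≤ ((2*j).factorial : ℝ) := by
          exact_mod_cast Nat.one_le_iff_ne_zero.mpr (Nat.factorial_ne_zero _)
        have hx2 : x^(2*j) ≤ 1 := pow_le_one₀ hx0 hx1
        calc x^(2*j) / ((2*j).factorial : ℝ) ≤ x^(2*j) := div_le_self (by positivity) hf1
          _ ≤ 1 := hx2
      have h2 : |u ^ (2*(j:ℝ)-1-α)| = u ^ (2*(j:ℝ)-1-α) :=
        abs_of_pos (Real.rpow_pos_of_pos hu _)
      rw [h2]
      exact mul_le_of_le_one_left (Real.rpow_pos_of_pos hu _).le h1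
  have hint_fJ_Ioc : IntegrableOn fJ (Ioc 0 T) := by
    apply integrableOn_Ioc_aux (C := 1/((2*J+2).factorial : ℝ)) (s := 2*(J:ℝ)+1-α)
    · exact ((continuous_gg (J+1)).comp (continuous_const.mul continuous_id)).continuousOn.mul
        (contOn_rpow _)
    · have : 2*(n:ℝ) ≤ 2*(J:ℝ) := by
        have : (n:ℝ) ≤ (J:ℝ) := by exact_mod_cast hJn
        linarith
      linarith
    · intro u hu _
      have hb : |gg (J+1) (x*u)| ≤ (1/((2*J+2).factorial : ℝ)) * u^(2*J+2) := by
        refine (bound_gg (J+1) _ (mul_nonneg hx0 hu.le)).trans ?_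
        rw [show 2*(J+1) = 2*J+2 from by omega]
        rw [div_eq_mul_inv, one_div, mul_comm]
        apply mul_le_mul_of_nonneg_left _ (by positivity)
        apply pow_le_pow_left₀ (mul_nonneg hx0 hu.le)
        nlinarith
      have h := abs_mul_rpow_le (p := -1-α) hu hb
      have he : ((2*J+2 : ℕ):ℝ) + (-1-α) = 2*(J:ℝ)+1-α := by push_cast; ring
      rwa [he] at h
  have hIoc_val : ∫ t in Ioc (0:ℝ) T, fful t
      = (∫ t in Ioc (0:ℝ) T, fJ t) + ∑ j ∈ Finset.Ico (n+1) (J+1), tj j := by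
    rw [show (fun t => fful t) = fun t => fJ t + ∑ j ∈ Finset.Ico (n+1) (J+1), pw j t
      from funext hptIoc]
    rw [MeasureTheory.integral_add hint_fJ_Ioc (integrable_finset_sum _ hint_pw_Ioc),
      MeasureTheory.integral_finset_sum _ hint_pw_Ioc]
    congr 1
    apply Finset.sum_congr rfl
    intro j hj
    have hj' : n+1 ≤ j := (Finset.mem_Ico.mp hj).1
    have hs : -1 < 2*(j:ℝ)-1-α := by
      have : ((n:ℝ)+1) ≤ (j:ℝ) := by exact_mod_cast hj'
      linarith
    have : ∫ t in Ioc (0:ℝ) T, pw j t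
        = ((-1:ℝ)^j * x^(2*j) / (2*j).factorial) * ∫ t in Ioc (0:ℝ) T, t^(2*(j:ℝ)-1-α) := by
      rw [← MeasureTheory.integral_const_mul]
      apply MeasureTheory.setIntegral_congr_fun measurableSet_Ioc
      intro t ht
      exact pw_eq α j ht.1
    rw [this, rpow_integral_Ioc hT hs, show 2*(j:ℝ)-1-α+1 = 2*(j:ℝ)-α from by ring]
  -- Ioi piece
  have hptIoi : ∀ t : ℝ, fful t = cpart t - ∑ j ∈ Finset.range (n+1), pw j t := by
    intro t
    show gg (n+1) (x*t) * t^(-1-α) = Real.cos (x*t) * t^(-1-α) - _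
    unfold gg cosP
    rw [sub_mul, Finset.sum_mul]
  have hint_cpart : IntegrableOn cpart (Ioi T) := by
    apply Integrable.mono' (integrableOn_Ioi_rpow_of_lt (by linarith : -1-α < -1) hT)
    · apply ContinuousOn.aestronglyMeasurable _ measurableSet_Ioi
      exact ((Real.continuous_cos.comp (continuous_const.mul continuous_id)).continuousOn).mul
        ((contOn_rpow _).mono (fun t ht => lt_trans hT ht))
    · refine (ae_restrict_iff' measurableSet_Ioi).2 (Filter.Eventually.of_forall ?_)
      intro t ht
      have ht0 : (0:ℝ) < t := lt_trans hT ht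
      show |Real.cos (x*t) * t^(-1-α)| ≤ t^(-1-α)
      rw [abs_mul, abs_of_pos (Real.rpow_pos_of_pos ht0 _)]
      exact mul_le_of_le_one_left (Real.rpow_pos_of_pos ht0 _).le (Real.abs_cos_le_one _)
  have hint_pw_Ioi : ∀ j ∈ Finset.range (n+1), IntegrableOn (pw j) (Ioi T) := by
    intro j hj
    have hj' : j ≤ n := Nat.lt_succ_iff.mp (Finset.mem_range.mp hj)
    have hsj : 2*(j:ℝ)-1-α < -1 := by
      have : (j:ℝ) ≤ (n:ℝ) := by exact_mod_cast hj'
      linarith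
    apply Integrable.mono' ((integrableOn_Ioi_rpow_of_lt hsj hT).const_mul
      (|(-1:ℝ)^j * x^(2*j) / (2*j).factorial|))
    · apply ContinuousOn.aestronglyMeasurable _ measurableSet_Ioi
      exact (((continuous_const.mul ((continuous_const.mul continuous_id).pow _)).div_const
        _).continuousOn).mul ((contOn_rpow _).mono (fun t ht => lt_trans hT ht))
    · refine (ae_restrict_iff' measurableSet_Ioi).2 (Filter.Eventually.of_forall ?_)
      intro t ht
      have ht0 : (0:ℝ) < t := lt_trans hT ht
      show |pw j t| ≤ |(-1:ℝ)^j * x^(2*j) / (2*j).factorial| * t^(2*(j:ℝ)-1-α)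
      simp only [hpw]
      rw [pw_eq α j ht0, abs_mul, abs_of_pos (Real.rpow_pos_of_pos ht0 _)]
  have hIoi_val : ∫ t in Ioi T, fful t
      = (∫ t in Ioi T, cpart t) + ∑ j ∈ Finset.range (n+1), tj j := by
    rw [show (fun t => fful t) = fun t => cpart t - ∑ j ∈ Finset.range (n+1), pw j t
      from funext hptIoi]
    rw [MeasureTheory.integral_sub hint_cpart (integrable_finset_sum _ hint_pw_Ioi),
      MeasureTheory.integral_finset_sum _ hint_pw_Ioi]
    rw [sub_eq_add_neg, ← Finset.sum_neg_distrib]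
    congr 1
    apply Finset.sum_congr rfl
    intro j hj
    have hj' : j ≤ n := Nat.lt_succ_iff.mp (Finset.mem_range.mp hj)
    have hsj : 2*(j:ℝ)-1-α < -1 := by
      have : (j:ℝ) ≤ (n:ℝ) := by exact_mod_cast hj'
      linarith
    have : ∫ t in Ioi T, pw j t
        = ((-1:ℝ)^j * x^(2*j) / (2*j).factorial) * ∫ t in Ioi T, t^(2*(j:ℝ)-1-α) := by
      rw [← MeasureTheory.integral_const_mul]
      apply MeasureTheory.setIntegral_congr_fun measurableSet_Ioi
      intro t ht
      exact pw_eq α j (lt_trans hT ht)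
    rw [this, integral_Ioi_rpow_of_lt hsj hT,
      show 2*(j:ℝ)-1-α+1 = 2*(j:ℝ)-α from by ring]
    unfold tj
    ring
  -- combine sums
  have hsum_comb : (∑ j ∈ Finset.range (n+1), tj j) + ∑ j ∈ Finset.Ico (n+1) (J+1), tj j
      = ∑ j ∈ Finset.range (J+1), tj j :=
    Finset.sum_range_add_sum_Ico _ (by omega)
  have htj_eq : ∀ j, tj j = ccoef α T j * x^(2*j) := by
    intro j
    have hf : ((2*j).factorial : ℝ) ≠ 0 := by positivity
    have hc : (2*(j:ℝ)-α) ≠ 0 := by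
      rcases le_or_gt j n with hcase | hcase
      · have : (j:ℝ) ≤ (n:ℝ) := by exact_mod_cast hcase
        intro h; nlinarith
      · have : ((n:ℝ)+1) ≤ (j:ℝ) := by exact_mod_cast hcase
        intro h; nlinarith
    unfold tj
    unfold ccoef
    field_simp
  -- error bounds
  have hE1 : |∫ t in Ioc (0:ℝ) T, fJ t|
      ≤ T ^ (2*(J:ℝ)+2-α) / ((2*(J:ℝ)+2-α) * (2*J+2).factorial) := by
    have hnJ : (n:ℝ) ≤ (J:ℝ) := by exact_mod_cast hJn
    have hsJ : -1 < 2*(J:ℝ)+1-α := by linarith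
    have hgint : Integrable (fun t : ℝ => (1/((2*J+2).factorial : ℝ)) * t^(2*(J:ℝ)+1-α))
        (volume.restrict (Ioc (0:ℝ) T)) := by
      have := (intervalIntegral.intervalIntegrable_rpow' (a := 0) (b := T) hsJ).const_mul
        (1/((2*J+2).factorial : ℝ))
      rwa [intervalIntegrable_iff_integrableOn_Ioc_of_le hT.le] at this
    have hbd : ∀ᵐ t ∂(volume.restrict (Ioc (0:ℝ) T)),
        ‖fJ t‖ ≤ (1/((2*J+2).factorial : ℝ)) * t^(2*(J:ℝ)+1-α) := by
      refine (ae_restrict_iff' measurableSet_Ioc).2 (Filter.Eventually.of_forall ?_)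
      intro u hu
      have hb : |gg (J+1) (x*u)| ≤ (1/((2*J+2).factorial : ℝ)) * u^(2*J+2) := by
        refine (bound_gg (J+1) _ (mul_nonneg hx0 hu.1.le)).trans ?_
        rw [show 2*(J+1) = 2*J+2 from by omega]
        rw [div_eq_mul_inv, one_div, mul_comm]
        apply mul_le_mul_of_nonneg_left _ (by positivity)
        apply pow_le_pow_left₀ (mul_nonneg hx0 hu.1.le)
        nlinarith [hu.1]
      have h := abs_mul_rpow_le (p := -1-α) hu.1 hb
      have he : ((2*J+2 : ℕ):ℝ) + (-1-α) = 2*(J:ℝ)+1-α := by push_cast; ring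
      rw [he] at h
      exact h
    have h := MeasureTheory.norm_integral_le_of_norm_le hgint hbd
    rw [MeasureTheory.integral_const_mul, rpow_integral_Ioc hT hsJ] at h
    rw [show 2*(J:ℝ)+1-α+1 = 2*(J:ℝ)+2-α from by ring] at h
    refine h.trans (le_of_eq ?_)
    rw [div_mul_div_comm, one_mul, mul_comm (((2*J+2).factorial : ℕ):ℝ) (2*(J:ℝ)+2-α)]
  have hE2 : |∫ t in Ioi T, cpart t| ≤ T ^ (-α) / α := by
    have hgint : Integrable (fun t : ℝ => t^(-1-α)) (volume.restrict (Ioi T)) :=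
      integrableOn_Ioi_rpow_of_lt (by linarith) hT
    have hbd : ∀ᵐ t ∂(volume.restrict (Ioi T)), ‖cpart t‖ ≤ t^(-1-α) := by
      refine (ae_restrict_iff' measurableSet_Ioi).2 (Filter.Eventually.of_forall ?_)
      intro t ht
      have ht0 : (0:ℝ) < t := lt_trans hT ht
      show |Real.cos (x*t) * t^(-1-α)| ≤ t^(-1-α)
      rw [abs_mul, abs_of_pos (Real.rpow_pos_of_pos ht0 _)]
      exact mul_le_of_le_one_left (Real.rpow_pos_of_pos ht0 _).le (Real.abs_cos_le_one _)
    have h := MeasureTheory.norm_integral_le_of_norm_le hgint hbd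
    rw [integral_Ioi_rpow_of_lt (by linarith : (-1-α:ℝ) < -1) hT] at h
    rw [show (-1-α:ℝ)+1 = -α from by ring] at h
    rwa [neg_div_neg_eq] at h
  have key : KK (n+1) α * x ^ α - (∑ j ∈ Finset.range (J+1), ccoef α T j * x^(2*j))
      = (∫ t in Ioc (0:ℝ) T, fJ t) + ∫ t in Ioi T, cpart t := by
    have : ∑ j ∈ Finset.range (J+1), ccoef α T j * x^(2*j)
        = ∑ j ∈ Finset.range (J+1), tj j := by
      apply Finset.sum_congr rfl
      intro j _
      rw [htj_eq j]
    rw [this, hid, hsplit, hIoc_val, hIoi_val, ← hsum_comb]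
    ring
  rw [key]
  exact (abs_add_le _ _).trans (add_le_add hE1 hE2)

lemma E1_coef_le_one (J : ℕ) {T : ℝ} (hT : 0 < T) (h2T : 2*T ≤ (J:ℝ)+2)
    (hTlog : T ≤ ((J:ℝ)+1) * Real.log 2) :
    T^(2*J+2) / ((2*J+2).factorial : ℝ) ≤ 1 := by
  have hfacb : ((J+1).factorial : ℝ) * ((J:ℝ)+2)^(J+1) ≤ ((2*J+2).factorial : ℝ) := by
    have h := Nat.factorial_mul_pow_le_factorial (m := J+1) (n := J+1)
    have h1 : (J+1) + (J+1) = 2*J+2 := by omega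
    have h2 : (J+1) + 1 = J+2 := by omega
    rw [h1, h2] at h
    calc ((J+1).factorial : ℝ) * ((J:ℝ)+2)^(J+1)
        = (((J+1).factorial * (J+2)^(J+1) : ℕ) : ℝ) := by push_cast; ring
      _ ≤ _ := by exact_mod_cast h
  have hd1 : (0:ℝ) < ((J+1).factorial : ℝ) * ((J:ℝ)+2)^(J+1) := by positivity
  have step1 : T^(2*J+2) / ((2*J+2).factorial : ℝ)
      ≤ T^(2*J+2) / (((J+1).factorial : ℝ) * ((J:ℝ)+2)^(J+1)) := by
    gcongr
  have step2 : T^(2*J+2) / (((J+1).factorial : ℝ) * ((J:ℝ)+2)^(J+1))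
      = (T^(J+1) / ((J+1).factorial : ℝ)) * (T/((J:ℝ)+2))^(J+1) := by
    rw [show 2*J+2 = (J+1)+(J+1) from by omega, pow_add, div_pow]
    rw [div_mul_div_comm]
  have hexp : T^(J+1) / ((J+1).factorial : ℝ) ≤ Real.exp T := by
    have hsum := Real.sum_le_exp_of_nonneg hT.le (J+2)
    refine le_trans ?_ hsum
    exact Finset.single_le_sum (f := fun i => T^i / (i.factorial : ℝ))
      (fun i _ => by positivity) (Finset.self_mem_range_succ (J+1))
  have hhalf : (T/((J:ℝ)+2))^(J+1) ≤ (1/2)^(J+1) := by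
    apply pow_le_pow_left₀ (by positivity)
    rw [div_le_div_iff₀ (by positivity) (by norm_num)]
    linarith
  have hexp2 : Real.exp T ≤ 2^(J+1) := by
    calc Real.exp T ≤ Real.exp (((J:ℝ)+1) * Real.log 2) := Real.exp_le_exp.mpr hTlog
      _ = (Real.exp (Real.log 2))^(J+1) := by
          rw [← Real.exp_nat_mul]
          congr 1
          push_cast; ring
      _ = 2^(J+1) := by rw [Real.exp_log (by norm_num)]
  calc T^(2*J+2) / ((2*J+2).factorial : ℝ)
      ≤ (T^(J+1) / ((J+1).factorial : ℝ)) * (T/((J:ℝ)+2))^(J+1) := step1.trans step2.le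
    _ ≤ Real.exp T * (1/2)^(J+1) := by
        apply mul_le_mul hexp hhalf (by positivity) (Real.exp_pos T).le
    _ ≤ 2^(J+1) * (1/2)^(J+1) := by
        apply mul_le_mul_of_nonneg_right hexp2 (by positivity)
    _ = 1 := by
        rw [← mul_pow]
        norm_num

lemma final_est (n J : ℕ) {α T x : ℝ} (hlo : 2*(n:ℝ) < α) (hhi : α < 2*(n:ℝ)+2)
    (hT : 0 < T) (hJn : n ≤ J) (hx0 : 0 ≤ x) (hx1 : x ≤ 1)
    (h2T : 2*T ≤ (J:ℝ)+2) (hTlog : T ≤ ((J:ℝ)+1) * Real.log 2)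
    (hJα : 1 ≤ 2*(J:ℝ)+2-α) :
    |x ^ α - ∑ j ∈ Finset.range (J+1), (ccoef α T j / KK (n+1) α) * x^(2*j)|
      ≤ (1 + 1/α) / |KK (n+1) α| * T ^ (-α) := by
  have hα0 : (0:ℝ) < α := lt_of_le_of_lt (by positivity) hlo
  have hKne : KK (n+1) α ≠ 0 := KK_ne n hlo hhi
  have hKpos : 0 < |KK (n+1) α| := abs_pos.mpr hKne
  have hmain := main_est n J hlo hhi hT hJn hx0 hx1
  have hTneg : (0:ℝ) < T ^ (-α) := Real.rpow_pos_of_pos hT _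
  have hfirst : T ^ (2*(J:ℝ)+2-α) / ((2*(J:ℝ)+2-α) * (2*J+2).factorial) ≤ T ^ (-α) := by
    have hsplit : T ^ (2*(J:ℝ)+2-α) = T^(2*J+2) * T ^ (-α) := by
      rw [← Real.rpow_natCast T (2*J+2), ← Real.rpow_add hT]
      congr 1
      push_cast; ring
    rw [hsplit]
    rw [div_le_iff₀ (by positivity)]
    have hcoef := E1_coef_le_one J hT h2T hTlog
    have h1 : T^(2*J+2) ≤ ((2*J+2).factorial : ℝ) := by
      rw [div_le_one (by positivity)] at hcoef
      exact hcoef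
    calc T^(2*J+2) * T ^ (-α) ≤ ((2*J+2).factorial : ℝ) * T ^ (-α) := by
          apply mul_le_mul_of_nonneg_right h1 hTneg.le
      _ ≤ T ^ (-α) * ((2*(J:ℝ)+2-α) * (2*J+2).factorial) := by
          rw [mul_comm]
          apply mul_le_mul_of_nonneg_left _ hTneg.le
          nlinarith [Nat.one_le_iff_ne_zero.mpr (Nat.factorial_ne_zero (2*J+2)),
            (Nat.cast_le (α := ℝ)).mpr (Nat.one_le_iff_ne_zero.mpr (Nat.factorial_ne_zero (2*J+2)))]
  have htot : |KK (n+1) α * x ^ α - ∑ j ∈ Finset.range (J+1), ccoef α T j * x^(2*j)|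
      ≤ (1 + 1/α) * T ^ (-α) := by
    refine hmain.trans ?_
    have : T ^ (-α) / α = (1/α) * T ^ (-α) := by ring
    rw [this]
    nlinarith [hfirst]
  have hdiv : x ^ α - ∑ j ∈ Finset.range (J+1), (ccoef α T j / KK (n+1) α) * x^(2*j)
      = (KK (n+1) α * x ^ α - ∑ j ∈ Finset.range (J+1), ccoef α T j * x^(2*j)) / KK (n+1) α := by
    rw [sub_div, mul_comm, mul_div_assoc, div_self hKne, mul_one, Finset.sum_div]
    congr 1
    apply Finset.sum_congr rfl
    intro j _
    ring
  rw [hdiv, abs_div]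
  rw [div_le_iff₀ hKpos]
  calc |KK (n+1) α * x ^ α - ∑ j ∈ Finset.range (J+1), ccoef α T j * x^(2*j)|
      ≤ (1 + 1/α) * T ^ (-α) := htot
    _ = (1 + 1/α) / |KK (n+1) α| * T ^ (-α) * |KK (n+1) α| := by
        field_simp

theorem stmt10 (α : ℝ) (hα : 0 < α) (hαn : ∀ k : ℕ, α ≠ k) :
    (fun m : ℕ => ratErr (fun x => |x| ^ α) (-1) 1 m 0)
      =O[atTop] (fun m : ℕ => (m : ℝ) ^ (-α)) := by
  classical
  set k := ⌊α⌋₊ with hk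
  set n := k / 2 with hn
  have hk1 : (k:ℝ) < α := lt_of_le_of_ne (Nat.floor_le hα.le) (Ne.symm (hαn k))
  have hk2 : α < (k:ℝ) + 1 := Nat.lt_floor_add_one α
  have hlo : 2*(n:ℝ) < α := by
    have h1 : 2*n ≤ k := by omega
    have h2 : ((2*n : ℕ):ℝ) ≤ (k:ℝ) := by exact_mod_cast h1
    push_cast at h2
    linarith
  have hhi : α < 2*(n:ℝ)+2 := by
    have h1 : k ≤ 2*n+1 := by omega
    have h2 : ((k : ℕ):ℝ) ≤ ((2*n+1 : ℕ):ℝ) := by exact_mod_cast h1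
    push_cast at h2
    linarith
  have hKne : KK (n+1) α ≠ 0 := KK_ne n hlo hhi
  have hKpos : 0 < |KK (n+1) α| := abs_pos.mpr hKne
  rw [Asymptotics.isBigO_iff]
  refine ⟨(1 + 1/α) / |KK (n+1) α| * (8:ℝ)^α, ?_⟩
  have hM : ∀ᶠ m : ℕ in atTop, 2*n + 2 + ⌈α⌉₊ ≤ m := eventually_ge_atTop _
  filter_upwards [hM] with m hm
  -- set up parameters
  set J := m / 2 with hJ
  set T : ℝ := (m:ℝ) / 8 with hT'
  have hm1 : 1 ≤ m := by omega
  have hmR : (1:ℝ) ≤ (m:ℝ) := by exact_mod_cast hm1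
  have hT : 0 < T := by rw [hT']; linarith
  have hJn : n ≤ J := by omega
  have hmJle : (m:ℝ) ≤ 2*(J:ℝ)+1 := by
    have : m ≤ 2*J+1 := by omega
    exact_mod_cast this
  have hJm : 2*J ≤ m := by omega
  have h2T : 2*T ≤ (J:ℝ)+2 := by rw [hT']; linarith
  have hTlog : T ≤ ((J:ℝ)+1) * Real.log 2 := by
    have hlog := Real.log_two_gt_d9
    have hJ0 : (0:ℝ) ≤ (J:ℝ) := Nat.cast_nonneg J
    rw [hT']
    nlinarith
  have hJα : 1 ≤ 2*(J:ℝ)+2-α := by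
    have hceil : α ≤ (⌈α⌉₊ : ℝ) := Nat.le_ceil α
    have : (⌈α⌉₊ : ℝ) ≤ (m:ℝ) := by
      have : ⌈α⌉₊ ≤ m := by omega
      exact_mod_cast this
    linarith
  -- the polynomial
  set p : Polynomial ℝ := ∑ j ∈ Finset.range (J+1),
    Polynomial.C (ccoef α T j / KK (n+1) α) * Polynomial.X^(2*j) with hp
  have hdeg : p.degree ≤ (m : ℕ) := by
    rw [hp]
    refine (Polynomial.degree_sum_le _ _).trans ?_
    apply Finset.sup_le
    intro j hj
    refine (Polynomial.degree_C_mul_X_pow_le _ _).trans ?_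
    have hjJ : j ≤ J := Nat.lt_succ_iff.mp (Finset.mem_range.mp hj)
    exact_mod_cast (by omega : 2*j ≤ m)
  have heval : ∀ y : ℝ, p.eval y = ∑ j ∈ Finset.range (J+1),
      (ccoef α T j / KK (n+1) α) * y^(2*j) := by
    intro y
    rw [hp, Polynomial.eval_finset_sum]
    apply Finset.sum_congr rfl
    intro j _
    simp
  -- pointwise error bound
  have herr : ∀ y ∈ Icc (-1:ℝ) 1, |(|y| ^ α) - p.eval y|
      ≤ (1 + 1/α) / |KK (n+1) α| * T ^ (-α) := by
    intro y hy
    have hy0 : 0 ≤ |y| := abs_nonneg y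
    have hy1 : |y| ≤ 1 := abs_le.mpr ⟨hy.1, hy.2⟩
    have hfin := final_est n J hlo hhi hT hJn hy0 hy1 h2T hTlog hJα
    have hsum_eq : ∑ j ∈ Finset.range (J+1), (ccoef α T j / KK (n+1) α) * |y|^(2*j)
        = p.eval y := by
      rw [heval y]
      apply Finset.sum_congr rfl
      intro j _
      congr 1
      rw [pow_mul, pow_mul, sq_abs]
    rwa [hsum_eq] at hfin
  -- the sup is a member of the approximation error set
  set S : Set ℝ := {e : ℝ | ∃ p q : Polynomial ℝ, p.degree ≤ (m:ℕ) ∧ q.degree ≤ (0:ℕ) ∧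
    (∀ x ∈ Icc (-1:ℝ) 1, q.eval x ≠ 0) ∧
    e = ⨆ x : Icc (-1:ℝ) 1, |(|(x:ℝ)| ^ α) - p.eval ↑x / q.eval ↑x|} with hS
  have hSnonneg : ∀ e ∈ S, 0 ≤ e := by
    rintro e ⟨p', q', _, _, _, rfl⟩
    exact Real.iSup_nonneg (fun x => abs_nonneg _)
  have hbdd : BddBelow S := ⟨0, hSnonneg⟩
  have hmem : (⨆ x : Icc (-1:ℝ) 1, |(|(x:ℝ)| ^ α) - p.eval ↑x / (Polynomial.C 1).eval ↑x|) ∈ S := by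
    refine ⟨p, Polynomial.C 1, hdeg, ?_, ?_, rfl⟩
    · exact le_trans Polynomial.degree_C_le (by norm_num)
    · intro x _
      simp
  have hnonempty : Nonempty (Icc (-1:ℝ) 1) := ⟨⟨0, by norm_num⟩⟩
  have hsup_le : (⨆ x : Icc (-1:ℝ) 1, |(|(x:ℝ)| ^ α) - p.eval ↑x / (Polynomial.C 1).eval ↑x|)
      ≤ (1 + 1/α) / |KK (n+1) α| * T ^ (-α) := by
    apply ciSup_le
    intro x
    have := herr x.1 x.2
    simpa using this
  have hratErr_le : ratErr (fun x => |x| ^ α) (-1) 1 m 0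
      ≤ (1 + 1/α) / |KK (n+1) α| * T ^ (-α) := by
    unfold ratErr
    exact le_trans (csInf_le hbdd hmem) hsup_le
  have hratErr_nn : 0 ≤ ratErr (fun x => |x| ^ α) (-1) 1 m 0 := by
    unfold ratErr
    exact Real.sInf_nonneg hSnonneg
  -- convert T^(-α) to m^(-α)
  have hTm : T ^ (-α) = (8:ℝ)^α * (m:ℝ) ^ (-α) := by
    rw [hT', Real.div_rpow (by linarith) (by norm_num)]
    rw [Real.rpow_neg (by norm_num : (0:ℝ) ≤ 8)]
    field_simp
  have hmpos : (0:ℝ) < (m:ℝ) ^ (-α) := Real.rpow_pos_of_pos (by linarith) _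
  rw [Real.norm_eq_abs, Real.norm_eq_abs, abs_of_nonneg hratErr_nn, abs_of_pos hmpos]
  calc ratErr (fun x => |x| ^ α) (-1) 1 m 0
      ≤ (1 + 1/α) / |KK (n+1) α| * T ^ (-α) := hratErr_le
    _ = (1 + 1/α) / |KK (n+1) α| * (8:ℝ)^α * (m:ℝ) ^ (-α) := by rw [hTm]; ring
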